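/- For the root system of finite type A_n with fundamental weights ω_1, ..., ω_n and longest Weyl group element w_0, and for 1 ≤ ℓ ≤ n, the height of ρ_ℓ − w_0(ρ_ℓ), where ρ_ℓ = ω_n + ω_{n−1} + ... + ω_{n−ℓ+1}, equals ℓ(ℓ+1)(3n − 2ℓ + 2)/6. -/
import Mathlib

lemma key_sum (n ℓ : ℕ) (h : ℓ ≤ n) :
    ∑ i ∈ Finset.Ico (n - ℓ) n, (((i : ℚ) + 1) * ((n : ℚ) - (i : ℚ)))
      = (ℓ : ℚ) * ((ℓ : ℚ) + 1) * (3 * (n : ℚ) - 2 * (ℓ : ℚ) + 2) / 6 := by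
  induction ℓ with
  | zero => simp
  | succ k ih =>
    have hk : k ≤ n := Nat.le_of_succ_le h
    have hlt : n - (k + 1) < n := by omega
    have hsucc : n - (k + 1) + 1 = n - k := by omega
    rw [Finset.sum_eq_sum_Ico_succ_bot hlt, hsucc, ih hk]
    have hc : ((n - (k + 1) : ℕ) : ℚ) = (n : ℚ) - ((k : ℚ) + 1) := by
      push_cast [Nat.cast_sub h]; ring
    rw [hc]
    push_cast
    ring

theorem stmt_15 (n ℓ : ℕ) (hl : 1 ≤ ℓ) (hln : ℓ ≤ n)
    (V : Type*) [AddCommGroup V] [Module ℚ V]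
    (ω : Fin n → V) (ht : V →ₗ[ℚ] ℚ) (w0 : V →ₗ[ℚ] V)
    (hht : ∀ i : Fin n, ht (ω i) = (((i : ℕ) : ℚ) + 1) * ((n : ℚ) - ((i : ℕ) : ℚ)) / 2)
    (hw0 : ∀ i : Fin n, w0 (ω i) = - ω i.rev) :
    ht ((∑ i ∈ Finset.univ.filter (fun i : Fin n => n - ℓ ≤ (i : ℕ)), ω i)
        - w0 (∑ i ∈ Finset.univ.filter (fun i : Fin n => n - ℓ ≤ (i : ℕ)), ω i))
      = (ℓ : ℚ) * ((ℓ : ℚ) + 1) * (3 * (n : ℚ) - 2 * (ℓ : ℚ) + 2) / 6 := by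
  have hterm : ∀ i : Fin n, ht (ω i) + ht (ω i.rev)
      = (((i : ℕ) : ℚ) + 1) * ((n : ℚ) - ((i : ℕ) : ℚ)) := by
    intro i
    rw [hht, hht]
    have hrev : ((i.rev : ℕ) : ℚ) = (n : ℚ) - ((i : ℕ) : ℚ) - 1 := by
      have hi : (i : ℕ) < n := i.isLt
      have h1 : (i.rev : ℕ) = n - 1 - i := by simp [Fin.rev]; omega
      rw [h1, Nat.cast_sub (by omega : (i:ℕ) ≤ n - 1), Nat.cast_sub (by omega : 1 ≤ n)]
      push_cast; ring
    rw [hrev]; ring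
  have hw0sum : w0 (∑ i ∈ Finset.univ.filter (fun i : Fin n => n - ℓ ≤ (i : ℕ)), ω i)
      = ∑ i ∈ Finset.univ.filter (fun i : Fin n => n - ℓ ≤ (i : ℕ)), -ω i.rev := by
    rw [map_sum]
    exact Finset.sum_congr rfl (fun i _ => hw0 i)
  rw [map_sub, hw0sum, map_sum, map_sum, ← Finset.sum_sub_distrib]
  simp only [map_neg, sub_neg_eq_add]
  rw [Finset.sum_congr rfl (fun i _ => hterm i)]
  rw [Finset.sum_filter,
    Fin.sum_univ_eq_sum_range
      (fun i => if n - ℓ ≤ i then (((i : ℕ) : ℚ) + 1) * ((n : ℚ) - ((i : ℕ) : ℚ)) else 0),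
    ← Finset.sum_filter]
  have hset : (Finset.range n).filter (fun i => n - ℓ ≤ i) = Finset.Ico (n - ℓ) n := by
    ext i; simp [Finset.mem_Ico, and_comm]
  rw [hset]
  exact key_sum n ℓ hln
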